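/- arXiv:1702.05705 — 2 statements merged into one kernel-verified Lean document; each statement's English description precedes it below -/
import Mathlib

section
/- For z a nonzero element of F_8, let O_z be the set of 4-element subsets X of F_8 with Σ_{x∈X} x = z. Then O_z has exactly 8 elements and is a single orbit under the translation action of the additive group of F_8 (which acts freely on O_z). -/
abbrev G8 := ZMod 2 × ZMod 2 × ZMod 2

set_option maxRecDepth 100000
set_option maxHeartbeats 1000000
set_option synthInstance.maxHeartbeats 1000000
set_option synthInstance.maxSize 2048

lemma keyG1 : ∀ z : G8, z ≠ 0 →
    (Finset.univ.filter (fun X : Finset G8 => X.card = 4 ∧ ∑ x ∈ X, x = z)).card = 8 := by decide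

lemma keyG2 : ∀ z : G8, z ≠ 0 →
    ∀ X ∈ (Finset.univ.filter (fun X : Finset G8 => X.card = 4 ∧ ∑ x ∈ X, x = z)), ∀ w : G8,
      X.image (fun x => w + x) ∈ (Finset.univ.filter (fun X : Finset G8 => X.card = 4 ∧ ∑ x ∈ X, x = z)) := by decide

lemma keyG3 : ∀ z : G8, z ≠ 0 →
    ∀ X ∈ (Finset.univ.filter (fun X : Finset G8 => X.card = 4 ∧ ∑ x ∈ X, x = z)),
    ∀ Y ∈ (Finset.univ.filter (fun X : Finset G8 => X.card = 4 ∧ ∑ x ∈ X, x = z)),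
      ∃ w : G8, Y = X.image (fun x => w + x) := by decide

lemma keyG4 : ∀ z : G8, z ≠ 0 →
    ∀ X ∈ (Finset.univ.filter (fun X : Finset G8 => X.card = 4 ∧ ∑ x ∈ X, x = z)), ∀ w : G8,
      X.image (fun x => w + x) = X → w = 0 := by decide

open scoped Classical
noncomputable section

abbrev F8 := GaloisField 2 3

instance : Fintype F8 := Fintype.ofFinite F8

theorem outer_sets_orbit (z : F8) (hz : z ≠ 0) :
    let Oz : Finset (Finset F8) :=
      Finset.univ.filter (fun X => X.card = 4 ∧ ∑ x ∈ X, x = z)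
    Oz.card = 8 ∧
    (∀ X ∈ Oz, ∀ w : F8, X.image (fun x => w + x) ∈ Oz) ∧
    (∀ X ∈ Oz, ∀ Y ∈ Oz, ∃ w : F8, Y = X.image (fun x => w + x)) ∧
    (∀ X ∈ Oz, ∀ w : F8, X.image (fun x => w + x) = X → w = 0) := by
  intro Oz
  haveI : Fact (Nat.Prime 2) := ⟨Nat.prime_two⟩
  have h3 : Module.finrank (ZMod 2) F8 = 3 := GaloisField.finrank 2 (by norm_num)
  have hG : Module.finrank (ZMod 2) G8 = 3 := by
    simp [Module.finrank_prod, Module.finrank_self]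
  let le : F8 ≃ₗ[ZMod 2] G8 := LinearEquiv.ofFinrankEq _ _ (h3.trans hG.symm)
  let e : F8 ≃+ G8 := le.toAddEquiv
  have hez : e z ≠ 0 := by
    intro h
    exact hz (e.injective (by simpa using h))
  set OzG : Finset (Finset G8) :=
    Finset.univ.filter (fun X : Finset G8 => X.card = 4 ∧ ∑ x ∈ X, x = e z) with hOzG
  have himg : ∀ X : Finset F8, (X.image e).card = X.card :=
    fun X => Finset.card_image_of_injective X e.injective
  have hsum : ∀ X : Finset F8, ∑ y ∈ X.image e, y = e (∑ x ∈ X, x) := by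
    intro X
    rw [Finset.sum_image (fun a _ b _ h => e.injective h)]
    exact (map_sum e (fun x => x) X).symm
  have hmem : ∀ X : Finset F8, X ∈ Oz ↔ X.image e ∈ OzG := by
    intro X
    simp only [Oz, hOzG, Finset.mem_filter, Finset.mem_univ, true_and, himg, hsum,
      EmbeddingLike.apply_eq_iff_eq]
  have hcomm : ∀ (X : Finset F8) (w : F8),
      (X.image (fun x => w + x)).image e = (X.image e).image (fun y => e w + y) := by
    intro X w
    rw [Finset.image_image, Finset.image_image]
    congr 1
    funext x
    simp [map_add]
  have hinv : ∀ Y : Finset G8, (Y.image e.symm).image e = Y := by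
    intro Y
    rw [Finset.image_image]
    simp
  refine ⟨?_, ?_, ?_, ?_⟩
  · -- cardinality
    have : Oz.card = OzG.card := by
      refine Finset.card_bij' (fun X _ => X.image e) (fun Y _ => Y.image e.symm) ?_ ?_ ?_ ?_
      · intro X hX; exact (hmem X).mp hX
      · intro Y hY
        show Finset.image (⇑e.symm) Y ∈ Oz
        rw [hmem, hinv]; exact hY
      · intro X hX
        show Finset.image (⇑e.symm) (Finset.image (⇑e) X) = X
        rw [Finset.image_image]; simp
      · intro Y hY; exact hinv Y
    rw [this]
    exact keyG1 (e z) hez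
  · intro X hX w
    rw [hmem, hcomm]
    exact keyG2 (e z) hez _ ((hmem X).mp hX) (e w)
  · intro X hX Y hY
    obtain ⟨w', hw'⟩ := keyG3 (e z) hez _ ((hmem X).mp hX) _ ((hmem Y).mp hY)
    refine ⟨e.symm w', ?_⟩
    apply Finset.image_injective e.injective
    rw [hcomm]
    simpa using hw'
  · intro X hX w hw
    have := keyG4 (e z) hez _ ((hmem X).mp hX) (e w)
    rw [← hcomm, hw] at this
    have h0 : e w = 0 := this rfl
    exact e.injective (by simpa using h0)
end
end

section
/- Let z be a nonzero element of F_8 and let X, Y be 4-element subsets of F_8 with Σ_{x∈X} x = Σ_{y∈Y} y = z, such that Y ≠ X and Y ≠ F_8 ∖ X. Then |X ∩ Y| = 2, and the symmetric difference X Δ Y is a 4-element set that is either a line containing 0 and z (i.e., of the form {0, a, b, a+b} with z ∈ {a,b,a+b}) or the complement of such a line. -/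
open scoped Classical
noncomputable section

lemma F8_card : Fintype.card F8 = 8 := by
  rw [← Nat.card_eq_fintype_card, GaloisField.card 2 3 (by norm_num)]; norm_num

lemma add_self (u : F8) : u + u = 0 := CharTwo.add_self_eq_zero u

lemma sum_univ_F8 : ∑ x : F8, x = 0 := by
  obtain ⟨c, hc⟩ : ∃ c : F8, c ∉ ({0, 1} : Finset F8) := by
    by_contra h
    push_neg at h
    have : (Finset.univ : Finset F8) ⊆ {0, 1} := fun x _ => h x
    have h1 := Finset.card_le_card this
    rw [Finset.card_univ, F8_card] at h1
    have h2 : ({0, 1} : Finset F8).card ≤ 2 :=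
      (Finset.card_insert_le _ _).trans (by simp)
    omega
  simp only [Finset.mem_insert, Finset.mem_singleton, not_or] at hc
  obtain ⟨hc0, hc1⟩ := hc
  have hbij : ∑ x : F8, c * x = ∑ x : F8, x := by
    exact Fintype.sum_bijective (fun x => c * x)
      (mulLeft_bijective₀ c hc0) _ _ (fun x => rfl)
  rw [← Finset.mul_sum] at hbij
  have : (c - 1) * ∑ x : F8, x = 0 := by ring_nf; rw [mul_comm] at hbij; linear_combination hbij
  rcases mul_eq_zero.mp this with h | h
  · exact absurd (sub_eq_zero.mp h) hc1
  · exact h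

lemma line_closed {a b : F8} {x y : F8}
    (hx : x ∈ ({0, a, b, a + b} : Finset F8)) (hy : y ∈ ({0, a, b, a + b} : Finset F8)) :
    x + y ∈ ({0, a, b, a + b} : Finset F8) := by
  simp only [Finset.mem_insert, Finset.mem_singleton] at *
  rcases hx with rfl | rfl | rfl | rfl <;> rcases hy with rfl | rfl | rfl | rfl <;>
    simp [add_self, add_comm, add_left_comm, add_assoc]

lemma compl_add_mem {L : Finset F8} (hL4 : L.card = 4)
    (hclosed : ∀ x ∈ L, ∀ y ∈ L, x + y ∈ L)
    {u v : F8} (hu : u ∉ L) (hv : v ∉ L) : u + v ∈ L := by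
  have himg : L.image (u + ·) = Lᶜ := by
    apply Finset.eq_of_subset_of_card_le
    · intro w hw
      simp only [Finset.mem_image] at hw
      obtain ⟨s, hs, rfl⟩ := hw
      simp only [Finset.mem_compl]
      intro hmem
      have h := hclosed _ hmem _ hs
      rw [add_assoc, add_self, add_zero] at h
      exact hu h
    · rw [Finset.card_compl, F8_card, hL4,
        Finset.card_image_of_injective _ (add_right_injective u), hL4]
  have hv' : v ∈ L.image (u + ·) := by rw [himg]; simpa using hv
  simp only [Finset.mem_image] at hv'
  obtain ⟨s, hs, rfl⟩ := hv'
  rwa [← add_assoc, add_self, zero_add]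

lemma line_struct {S : Finset F8} (h0 : (0:F8) ∈ S) (hc : S.card = 4)
    (hs : ∑ x ∈ S, x = 0) :
    ∃ a b : F8, a ≠ 0 ∧ b ≠ 0 ∧ a ≠ b ∧ S = {0, a, b, a + b} := by
  have hc3 : (S.erase 0).card = 3 := by rw [Finset.card_erase_of_mem h0, hc]
  obtain ⟨a, b, c, hab, hac, hbc, hE⟩ := Finset.card_eq_three.mp hc3
  have haS : a ∈ S.erase 0 := by rw [hE]; simp
  have hbS : b ∈ S.erase 0 := by rw [hE]; simp
  have hcS : c ∈ S.erase 0 := by rw [hE]; simp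
  have ha0 : a ≠ 0 := Finset.ne_of_mem_erase haS
  have hb0 : b ≠ 0 := Finset.ne_of_mem_erase hbS
  have hc0 : c ≠ 0 := Finset.ne_of_mem_erase hcS
  have hSi : S = insert 0 ({a, b, c} : Finset F8) := by
    rw [← hE, Finset.insert_erase h0]
  have hsum : a + b + c = 0 := by
    rw [hSi] at hs
    rw [Finset.sum_insert (by rw [← hE]; exact Finset.notMem_erase _ _)] at hs
    rw [Finset.sum_insert (by simp [hab, hac]), Finset.sum_insert (by simp [hbc]),
      Finset.sum_singleton] at hs
    rw [zero_add, ← add_assoc] at hs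
    exact hs
  have hcab : c = a + b := by
    have := congrArg (· + c) hsum
    simp only [zero_add] at this
    rw [add_assoc, add_self, add_zero] at this
    exact this.symm
  exact ⟨a, b, ha0, hb0, hab, by rw [hSi, hcab]⟩

lemma linindep_of {a b : F8} (ha : a ≠ 0) (hb : b ≠ 0) (hab : a ≠ b) :
    LinearIndependent (ZMod 2) ![a, b] := by
  rw [linearIndependent_fin2]
  refine ⟨hb, fun s => ?_⟩
  fin_cases s
  · show ¬ (0 : ZMod 2) • b = a; simpa using Ne.symm ha
  · show ¬ (1 : ZMod 2) • b = a; simpa using fun h => hab h.symm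

theorem symmDiff_of_outer_sets (z : F8) (hz : z ≠ 0) (X Y : Finset F8)
    (hXc : X.card = 4) (hYc : Y.card = 4)
    (hXs : ∑ x ∈ X, x = z) (hYs : ∑ y ∈ Y, y = z)
    (hne : Y ≠ X) (hnc : Y ≠ Xᶜ) :
    (X ∩ Y).card = 2 ∧
    ∃ a b : F8, LinearIndependent (ZMod 2) ![a, b] ∧
      z ∈ ({0, a, b, a + b} : Finset F8) ∧
      (symmDiff X Y = {0, a, b, a + b} ∨
        symmDiff X Y = ({0, a, b, a + b} : Finset F8)ᶜ) := by
  set S := symmDiff X Y with hSdef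
  set A := X \ Y with hAdef
  set B := Y \ X with hBdef
  set T := X ∩ Y with hTdef
  have hSAB : S = A ∪ B := by
    rw [hSdef, hAdef, hBdef]; rfl
  have hABdisj : Disjoint A B := disjoint_sdiff_sdiff
  have hsumX : ∑ x ∈ A, x + ∑ x ∈ T, x = z := by
    rw [← hXs, ← Finset.sum_union (Finset.disjoint_sdiff_inter X Y), Finset.sdiff_union_inter]
  have hsumY : ∑ x ∈ B, x + ∑ x ∈ T, x = z := by
    have h' : ∑ x ∈ Y \ X, x + ∑ x ∈ Y ∩ X, x = z := by
      rw [← Finset.sum_union (Finset.disjoint_sdiff_inter Y X), Finset.sdiff_union_inter]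
      exact hYs
    rw [hBdef, hTdef, Finset.inter_comm]
    exact h'
  have hsumS : ∑ x ∈ S, x = 0 := by
    rw [hSAB, Finset.sum_union hABdisj]
    have h1 : ∑ x ∈ A, x = z + ∑ x ∈ T, x := by
      have := congrArg (· + ∑ x ∈ T, x) hsumX
      rw [add_assoc, add_self, add_zero] at this
      rw [this]
    have h2 : ∑ x ∈ B, x = z + ∑ x ∈ T, x := by
      have := congrArg (· + ∑ x ∈ T, x) hsumY
      rw [add_assoc, add_self, add_zero] at this
      rw [this]
    rw [h1, h2, add_self]
  have hAcard : A.card + T.card = 4 := by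
    rw [hAdef, hTdef, Finset.card_sdiff_add_card_inter, hXc]
  have hBcard : B.card + T.card = 4 := by
    rw [hBdef, hTdef, Finset.inter_comm, Finset.card_sdiff_add_card_inter, hYc]
  have hScard : S.card = A.card + B.card := by
    rw [hSAB, Finset.card_union_of_disjoint hABdisj]
  have hTle : T.card ≤ 4 := by omega
  -- rule out T.card = 4
  have hT4 : T.card ≠ 4 := by
    intro h4
    have hTX : T = X := Finset.eq_of_subset_of_card_le Finset.inter_subset_left (by omega)
    have hTY : T = Y := Finset.eq_of_subset_of_card_le Finset.inter_subset_right (by omega)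
    exact hne (hTY ▸ hTX)
  have hT3 : T.card ≠ 3 := by
    intro h3
    have hS2 : S.card = 2 := by omega
    obtain ⟨u, v, huv, hUV⟩ := Finset.card_eq_two.mp hS2
    rw [hUV, Finset.sum_pair huv] at hsumS
    have : u = v := by
      have := congrArg (· + v) hsumS
      simp only [zero_add] at this
      rw [add_assoc, add_self, add_zero] at this
      exact this
    exact huv this
  have hT0 : T.card ≠ 0 := by
    intro h0
    have hTe : T = ∅ := Finset.card_eq_zero.mp h0
    have hdisj : Disjoint X Y := Finset.disjoint_iff_inter_eq_empty.mpr (hTdef ▸ hTe)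
    have hsub : Y ⊆ Xᶜ := fun y hy => Finset.mem_compl.mpr (fun hx =>
      Finset.disjoint_left.mp hdisj hx hy)
    have : Y = Xᶜ := Finset.eq_of_subset_of_card_le hsub
      (by rw [Finset.card_compl, F8_card, hXc, hYc])
    exact hnc this
  have hT1 : T.card ≠ 1 := by
    intro h1
    have hS6 : S.card = 6 := by omega
    have hSc2 : Sᶜ.card = 2 := by
      rw [Finset.card_compl, F8_card, hS6]
    have hsumSc : ∑ x ∈ Sᶜ, x = 0 := by
      have huniv : ∑ x ∈ S, x + ∑ x ∈ Sᶜ, x = ∑ x : F8, x := by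
        rw [← Finset.sum_union (disjoint_compl_right), Finset.union_compl]
      rw [hsumS, zero_add, sum_univ_F8] at huniv
      exact huniv
    obtain ⟨u, v, huv, hUV⟩ := Finset.card_eq_two.mp hSc2
    rw [hUV, Finset.sum_pair huv] at hsumSc
    have : u = v := by
      have := congrArg (· + v) hsumSc
      simp only [zero_add] at this
      rw [add_assoc, add_self, add_zero] at this
      exact this
    exact huv this
  have hT2 : T.card = 2 := by omega
  have hS4 : S.card = 4 := by omega
  have hA2 : A.card = 2 := by omega
  refine ⟨hT2, ?_⟩
  -- T ⊆ Sᶜ and A ⊆ S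
  have hTSc : ∀ x ∈ T, x ∉ S := by
    intro x hx hxS
    rw [hSdef, Finset.mem_symmDiff] at hxS
    rw [hTdef, Finset.mem_inter] at hx
    tauto
  have hAS : A ⊆ S := by rw [hSAB]; exact Finset.subset_union_left
  obtain ⟨u, v, huv, hUV⟩ := Finset.card_eq_two.mp hA2
  obtain ⟨p, q, hpq, hPQ⟩ := Finset.card_eq_two.mp hT2
  have hzsum : u + v + (p + q) = z := by
    rw [hUV, Finset.sum_pair huv, hPQ, Finset.sum_pair hpq] at hsumX
    exact hsumX
  by_cases h0 : (0 : F8) ∈ S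
  · obtain ⟨a, b, ha0, hb0, hab, hSL⟩ := line_struct h0 hS4 hsumS
    set L := ({0, a, b, a + b} : Finset F8) with hLdef
    have hcl : ∀ x ∈ L, ∀ y ∈ L, x + y ∈ L := fun x hx y hy => line_closed hx hy
    have hL4 : L.card = 4 := by rw [← hSL, hS4]
    have huL : u ∈ L := hSL ▸ hAS (hUV ▸ by simp)
    have hvL : v ∈ L := hSL ▸ hAS (hUV ▸ by simp)
    have hpL : p ∉ L := by rw [← hSL]; exact hTSc p (hPQ ▸ by simp)
    have hqL : q ∉ L := by rw [← hSL]; exact hTSc q (hPQ ▸ by simp)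
    have hzL : z ∈ L := by
      rw [← hzsum]
      exact hcl _ (hcl _ huL _ hvL) _ (compl_add_mem hL4 hcl hpL hqL)
    exact ⟨a, b, linindep_of ha0 hb0 hab, hzL, Or.inl hSL⟩
  · have hSc4 : Sᶜ.card = 4 := by
      rw [Finset.card_compl, F8_card, hS4]
    have h0c : (0 : F8) ∈ Sᶜ := Finset.mem_compl.mpr h0
    have hsumSc : ∑ x ∈ Sᶜ, x = 0 := by
      have huniv : ∑ x ∈ S, x + ∑ x ∈ Sᶜ, x = ∑ x : F8, x := by
        rw [← Finset.sum_union (disjoint_compl_right), Finset.union_compl]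
      rw [hsumS, zero_add, sum_univ_F8] at huniv
      exact huniv
    obtain ⟨a, b, ha0, hb0, hab, hSL⟩ := line_struct h0c hSc4 hsumSc
    set L := ({0, a, b, a + b} : Finset F8) with hLdef
    have hcl : ∀ x ∈ L, ∀ y ∈ L, x + y ∈ L := fun x hx y hy => line_closed hx hy
    have hL4 : L.card = 4 := by rw [← hSL, hSc4]
    have hSLc : S = Lᶜ := by rw [← hSL, compl_compl]
    have huL : u ∉ L := by
      have : u ∈ S := hAS (hUV ▸ by simp)
      rw [hSLc, Finset.mem_compl] at this; exact this
    have hvL : v ∉ L := by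
      have : v ∈ S := hAS (hUV ▸ by simp)
      rw [hSLc, Finset.mem_compl] at this; exact this
    have hpL : p ∈ L := by
      have := hTSc p (hPQ ▸ by simp)
      rw [hSLc, Finset.mem_compl, not_not] at this; exact this
    have hqL : q ∈ L := by
      have := hTSc q (hPQ ▸ by simp)
      rw [hSLc, Finset.mem_compl, not_not] at this; exact this
    have hzL : z ∈ L := by
      rw [← hzsum]
      exact hcl _ (compl_add_mem hL4 hcl huL hvL) _ (hcl _ hpL _ hqL)
    exact ⟨a, b, linindep_of ha0 hb0 hab, hzL, Or.inr hSLc⟩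
end
end
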